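/- Let n ≥ 3 and let β ∈ ℝ^{n-1} be such that d_β is a metric or d_{−β} is a metric (i.e., β ∈ B>_n ∪ (−B>_n)). Then d^μ_β is neutral, i.e. d^μ_β(τσ, τπ) = d^μ_β(σ,π) for all permutations σ, π, τ ∈ S_n, if and only if μ is constant (μ_i = μ_j for all i, j ∈ [n]). -/

import Mathlib

open Finset

noncomputable section

/-- `i >_σ j`: candidate `i` is ranked above candidate `j` by `σ`
(where `σ i` is the candidate in position `i`). -/
def prefOver {n : ℕ} (σ : Equiv.Perm (Fin n)) (i j : Fin n) : Prop :=
  σ.symm i < σ.symm j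

/-- `M(S,σ)`: the set of `>_σ`-maximal elements of `S` (a singleton when `S ≠ ∅`). -/
def bestSet {n : ℕ} (σ : Equiv.Perm (Fin n)) (S : Finset (Fin n)) : Finset (Fin n) :=
  S.filter fun x => ∀ y ∈ S, σ.symm x ≤ σ.symm y

/-- `△_S(σ,π) = M(S,σ) △ M(S,π)`. -/
def topDiff {n : ℕ} (σ π : Equiv.Perm (Fin n)) (S : Finset (Fin n)) : Finset (Fin n) :=
  symmDiff (bestSet σ S) (bestSet π S)

/-- The `(β,μ)`-top-difference distance; `β i` is the weight of menus of size `i+2`. -/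
def dTD (n : ℕ) (β : Fin (n - 1) → ℝ) (μ : Fin n → ℝ)
    (σ π : Equiv.Perm (Fin n)) : ℝ :=
  ∑ S ∈ Finset.univ.filter (fun S : Finset (Fin n) => 2 ≤ S.card),
    (if h : S.card - 2 < n - 1 then β ⟨S.card - 2, h⟩ else 0) *
      ∑ x ∈ topDiff σ π S, μ x

def IsSemimetric {α : Type*} (d : α → α → ℝ) : Prop :=
  (∀ x y, 0 ≤ d x y) ∧ (∀ x y, d x y = d y x) ∧ (∀ x, d x x = 0) ∧
    (∀ x y z, d x z ≤ d x y + d y z)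

def IsMetricFn {α : Type*} (d : α → α → ℝ) : Prop :=
  IsSemimetric d ∧ ∀ x y, d x y = 0 → x = y

section Aux
variable {n : ℕ} {z o : Fin n}

lemma bestSet_mul (τ σ : Equiv.Perm (Fin n)) (S : Finset (Fin n)) :
    bestSet (τ * σ) S = (bestSet σ (S.image ⇑τ.symm)).image ⇑τ := by
  ext x
  simp only [bestSet, Finset.mem_image, Finset.mem_filter]
  constructor
  · rintro ⟨hx, h⟩
    refine ⟨τ.symm x, ⟨⟨⟨x, hx, rfl⟩, ?_⟩, by simp⟩⟩
    rintro y ⟨b, hb, rfl⟩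
    have := h b hb
    exact this
  · rintro ⟨a, ⟨⟨⟨b, hb, rfl⟩, h⟩, rfl⟩⟩
    simp only [Equiv.apply_symm_apply]
    refine ⟨hb, fun y hy => ?_⟩
    have := h (τ.symm y) ⟨y, hy, rfl⟩
    exact this

lemma topDiff_mul (τ σ π : Equiv.Perm (Fin n)) (S : Finset (Fin n)) :
    topDiff (τ * σ) (τ * π) S = (topDiff σ π (S.image ⇑τ.symm)).image ⇑τ := by
  rw [topDiff, bestSet_mul, bestSet_mul, ← Finset.image_symmDiff _ _ τ.injective]
  rfl

lemma dTD_mul (β : Fin (n - 1) → ℝ) (μ : Fin n → ℝ) (τ σ π : Equiv.Perm (Fin n)) :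
    dTD n β μ (τ * σ) (τ * π) = dTD n β (fun x => μ (τ x)) σ π := by
  unfold dTD
  refine Finset.sum_nbij' (fun S => S.image ⇑τ.symm) (fun S => S.image ⇑τ) ?_ ?_ ?_ ?_ ?_
  · intro S hS
    simp only [Finset.mem_filter, Finset.mem_univ, true_and] at *
    rwa [Finset.card_image_of_injective _ τ.symm.injective]
  · intro S hS
    simp only [Finset.mem_filter, Finset.mem_univ, true_and] at *
    rwa [Finset.card_image_of_injective _ τ.injective]
  · intro S _; simp [Finset.image_image]
  · intro S _; simp [Finset.image_image]
  · intro S _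
    rw [Finset.card_image_of_injective _ τ.symm.injective, topDiff_mul,
      Finset.sum_image (fun x _ y _ h => τ.injective h)]

lemma bestSet_one_of_z (hz : (z : ℕ) = 0) {S : Finset (Fin n)} (hzS : z ∈ S) :
    bestSet 1 S = {z} := by
  ext x
  simp only [bestSet, Finset.mem_filter]
  simp only [bestSet, Equiv.Perm.one_def, Equiv.refl_symm, Equiv.refl_apply,
    Finset.mem_filter, Finset.mem_singleton]
  constructor
  · rintro ⟨hx, h⟩
    exact le_antisymm (h z hzS) (by simp [Fin.le_def, hz])
  · rintro rfl
    exact ⟨hzS, fun y _ => by simp [Fin.le_def, hz]⟩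

lemma bestSet_one_of_o (hz : (z : ℕ) = 0) (ho : (o : ℕ) = 1) {S : Finset (Fin n)}
    (hzS : z ∉ S) (hoS : o ∈ S) : bestSet 1 S = {o} := by
  have key : ∀ y ∈ S, o ≤ y := by
    intro y hy
    have : y ≠ z := fun h => hzS (h ▸ hy)
    have : (y : ℕ) ≠ 0 := fun h => this (Fin.ext (h.trans hz.symm))
    simp [Fin.le_def, ho]; omega
  ext x
  simp only [bestSet, Finset.mem_filter]
  simp only [bestSet, Equiv.Perm.one_def, Equiv.refl_symm, Equiv.refl_apply,
    Finset.mem_filter, Finset.mem_singleton]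
  constructor
  · rintro ⟨hx, h⟩
    exact le_antisymm (h o hoS) (key x hx)
  · rintro rfl
    exact ⟨hoS, key⟩

lemma bestSet_swap_both (hz : (z : ℕ) = 0) {S : Finset (Fin n)}
    (hoS : o ∈ S) : bestSet (Equiv.swap z o) S = {o} := by
  ext x
  simp only [bestSet, Finset.mem_filter]
  simp only [bestSet, Equiv.symm_swap, Finset.mem_filter, Finset.mem_singleton]
  constructor
  · rintro ⟨hx, h⟩
    have h1 : Equiv.swap z o x ≤ Equiv.swap z o o := h o hoS
    rw [Equiv.swap_apply_right] at h1
    have h2 : Equiv.swap z o x = z := le_antisymm h1 (by simp [Fin.le_def, hz])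
    exact (Equiv.swap z o).injective (h2.trans (Equiv.swap_apply_right z o).symm)
  · rintro rfl
    refine ⟨hoS, fun y _ => ?_⟩
    rw [Equiv.swap_apply_right]
    simp [Fin.le_def, hz]

lemma bestSet_swap_zonly (hz : (z : ℕ) = 0) (ho : (o : ℕ) = 1) {S : Finset (Fin n)}
    (hzS : z ∈ S) (hoS : o ∉ S) : bestSet (Equiv.swap z o) S = {z} := by
  have key : ∀ y ∈ S, o ≤ Equiv.swap z o y := by
    intro y hy
    rcases eq_or_ne y z with rfl | hyz
    · rw [Equiv.swap_apply_left]
    · have hyo : y ≠ o := fun h => hoS (h ▸ hy)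
      rw [Equiv.swap_apply_of_ne_of_ne hyz hyo]
      have h0 : (y : ℕ) ≠ 0 := fun h => hyz (Fin.ext (h.trans hz.symm))
      have h1 : (y : ℕ) ≠ 1 := fun h => hyo (Fin.ext (h.trans ho.symm))
      simp [Fin.le_def, ho]; omega
  ext x
  simp only [bestSet, Finset.mem_filter]
  simp only [bestSet, Equiv.symm_swap, Finset.mem_filter, Finset.mem_singleton]
  constructor
  · rintro ⟨hx, h⟩
    have h1 : Equiv.swap z o x ≤ Equiv.swap z o z := h z hzS
    rw [Equiv.swap_apply_left] at h1
    have h2 : Equiv.swap z o x = o := le_antisymm h1 (key x hx)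
    exact (Equiv.swap z o).injective (h2.trans (Equiv.swap_apply_left z o).symm)
  · rintro rfl
    refine ⟨hzS, fun y hy => ?_⟩
    rw [Equiv.swap_apply_left]
    exact key y hy

lemma bestSet_swap_none {S : Finset (Fin n)}
    (hzS : z ∉ S) (hoS : o ∉ S) : bestSet (Equiv.swap z o) S = bestSet 1 S := by
  unfold bestSet
  apply Finset.filter_congr
  intro x hx
  have hxz : x ≠ z := fun h => hzS (h ▸ hx)
  have hxo : x ≠ o := fun h => hoS (h ▸ hx)
  simp only [Equiv.symm_swap, Equiv.Perm.one_def, Equiv.refl_symm, Equiv.refl_apply]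
  constructor
  · intro h y hy
    have hyz : y ≠ z := fun hh => hzS (hh ▸ hy)
    have hyo : y ≠ o := fun hh => hoS (hh ▸ hy)
    have := h y hy
    rwa [Equiv.swap_apply_of_ne_of_ne hxz hxo,
      Equiv.swap_apply_of_ne_of_ne hyz hyo] at this
  · intro h y hy
    have hyz : y ≠ z := fun hh => hzS (hh ▸ hy)
    have hyo : y ≠ o := fun hh => hoS (hh ▸ hy)
    rw [Equiv.swap_apply_of_ne_of_ne hxz hxo,
      Equiv.swap_apply_of_ne_of_ne hyz hyo]
    exact h y hy

lemma topDiff_one_swap (hz : (z : ℕ) = 0) (ho : (o : ℕ) = 1) (S : Finset (Fin n)) :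
    topDiff 1 (Equiv.swap z o) S = if z ∈ S ∧ o ∈ S then {z, o} else ∅ := by
  have hzo : z ≠ o := fun h => by rw [h] at hz; omega
  unfold topDiff
  split_ifs with h
  · rw [bestSet_one_of_z hz h.1, bestSet_swap_both hz h.2, symmDiff_def]
    ext x
    simp only [sup_eq_union, Finset.mem_union, Finset.mem_sdiff, Finset.mem_singleton,
      Finset.mem_insert]
    constructor
    · rintro (⟨rfl, _⟩ | ⟨rfl, _⟩) <;> simp
    · rintro (rfl | rfl)
      · exact Or.inl ⟨rfl, hzo⟩
      · exact Or.inr ⟨rfl, fun hh => hzo hh.symm⟩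
  · push_neg at h
    by_cases hzS : z ∈ S
    · rw [bestSet_one_of_z hz hzS, bestSet_swap_zonly hz ho hzS (h hzS), symmDiff_self]
      rfl
    · by_cases hoS : o ∈ S
      · rw [bestSet_one_of_o hz ho hzS hoS, bestSet_swap_both hz hoS, symmDiff_self]
        rfl
      · rw [bestSet_swap_none hzS hoS, symmDiff_self]
        rfl

/-- the constant `C = ∑_{S ∋ z,o} β_{|S|}`. -/
def Cconst (n : ℕ) (β : Fin (n - 1) → ℝ) (z o : Fin n) : ℝ :=
  ∑ S ∈ Finset.univ.filter (fun S : Finset (Fin n) => (2 ≤ S.card ∧ z ∈ S) ∧ o ∈ S),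
    (if h : S.card - 2 < n - 1 then β ⟨S.card - 2, h⟩ else 0)

lemma dTD_one_swap (hz : (z : ℕ) = 0) (ho : (o : ℕ) = 1) (β : Fin (n - 1) → ℝ)
    (μ : Fin n → ℝ) :
    dTD n β μ 1 (Equiv.swap z o) = (μ z + μ o) * Cconst n β z o := by
  have hzo : z ≠ o := fun h => by rw [h] at hz; omega
  unfold dTD Cconst
  rw [Finset.mul_sum, Finset.sum_filter, Finset.sum_filter]
  apply Finset.sum_congr rfl
  intro S _
  rw [topDiff_one_swap hz ho]
  by_cases hc : 2 ≤ S.card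
  · by_cases hm : z ∈ S ∧ o ∈ S
    · rw [if_pos hc, if_pos (⟨⟨hc, hm.1⟩, hm.2⟩ : (2 ≤ S.card ∧ z ∈ S) ∧ o ∈ S),
        if_pos hm, Finset.sum_pair hzo]
      ring
    · rw [if_pos hc, if_neg hm, Finset.sum_empty, mul_zero,
        if_neg (fun hh : (2 ≤ S.card ∧ z ∈ S) ∧ o ∈ S => hm ⟨hh.1.2, hh.2⟩)]
  · rw [if_neg hc, if_neg (fun hh : (2 ≤ S.card ∧ z ∈ S) ∧ o ∈ S => hc hh.1.1)]

lemma Cconst_neg (β : Fin (n - 1) → ℝ) (z o : Fin n) :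
    Cconst n (-β) z o = -Cconst n β z o := by
  unfold Cconst
  rw [← Finset.sum_neg_distrib]
  apply Finset.sum_congr rfl
  intro S _
  by_cases h : S.card - 2 < n - 1 <;> simp [h]
end Aux

theorem stmt3 (n : ℕ) (hn : 3 ≤ n) (β : Fin (n - 1) → ℝ)
    (hβ : IsMetricFn (dTD n β fun _ => (1 : ℝ)) ∨
          IsMetricFn (dTD n (-β) fun _ => (1 : ℝ)))
    (μ : Fin n → ℝ) :
    (∀ τ σ π : Equiv.Perm (Fin n), dTD n β μ (τ * σ) (τ * π) = dTD n β μ σ π) ↔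
      (∀ i j : Fin n, μ i = μ j) := by
  have hz0 : (0 : ℕ) < n := by omega
  set z : Fin n := ⟨0, by omega⟩ with hzdef
  set o : Fin n := ⟨1, by omega⟩ with hodef
  have hz : (z : ℕ) = 0 := rfl
  have ho : (o : ℕ) = 1 := rfl
  have hzo : z ≠ o := fun h => by
    have := congrArg Fin.val h
    rw [hz, ho] at this; omega
  have hne1 : Equiv.swap z o ≠ 1 := fun h => hzo (Equiv.swap_eq_one_iff.mp h)
  -- the key constant is nonzero
  have hC : Cconst n β z o ≠ 0 := by
    intro h0
    rcases hβ with h | h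
    · apply hne1
      refine (h.2 1 (Equiv.swap z o) ?_).symm
      rw [dTD_one_swap hz ho, h0, mul_zero]
    · apply hne1
      refine (h.2 1 (Equiv.swap z o) ?_).symm
      rw [dTD_one_swap hz ho, Cconst_neg, h0, neg_zero, mul_zero]
  constructor
  · intro hneu
    have key : ∀ τ : Equiv.Perm (Fin n), μ (τ z) + μ (τ o) = μ z + μ o := by
      intro τ
      have h1 := hneu τ 1 (Equiv.swap z o)
      rw [dTD_mul, dTD_one_swap hz ho, dTD_one_swap hz ho] at h1
      exact mul_right_cancel₀ hC h1
    have pair : ∀ i j : Fin n, i ≠ j → μ i + μ j = μ z + μ o := by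
      intro i j hij
      set c : Equiv.Perm (Fin n) := Equiv.swap z i with hc
      set τ : Equiv.Perm (Fin n) := c * Equiv.swap o (c j) with hτ
      have hzcj : z ≠ c j := by
        intro h
        have : c z = c (c j) := congrArg c h
        rw [Equiv.swap_apply_left, Equiv.swap_apply_self] at this
        exact hij this
      have hτz : τ z = i := by
        show c (Equiv.swap o (c j) z) = i
        rw [Equiv.swap_apply_of_ne_of_ne hzo hzcj, Equiv.swap_apply_left]
      have hτo : τ o = j := by
        show c (Equiv.swap o (c j) o) = j
        rw [Equiv.swap_apply_left, Equiv.swap_apply_self]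
      have := key τ
      rwa [hτz, hτo] at this
    intro i j
    rcases eq_or_ne i j with rfl | hij
    · rfl
    have hk : ∃ k : Fin n, k ≠ i ∧ k ≠ j := by
      by_contra h
      push_neg at h
      have hsub : (Finset.univ : Finset (Fin n)) ⊆ {i, j} := by
        intro k _
        rcases eq_or_ne k i with rfl | hki
        · simp
        · simp [h k hki]
      have hcard := Finset.card_le_card hsub
      have h2 : ({i, j} : Finset (Fin n)).card ≤ 2 := Finset.card_insert_le _ _ |>.trans (by simp)
      simp only [Finset.card_univ, Fintype.card_fin] at hcard
      omega
    obtain ⟨k, hki, hkj⟩ := hk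
    have h1 := pair i k (Ne.symm hki)
    have h2 := pair j k (Ne.symm hkj)
    linarith
  · intro hconst τ σ π
    rw [dTD_mul]
    have : (fun x => μ (τ x)) = μ := funext fun x => hconst (τ x) x
    rw [this]
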